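/- Let γ, p > 0, η > 1 and β < pγ. Then ∫_0^∞ G_γ(u^p (η-1)) e^{-u^p} u^{-1-β} du = (Γ(γ - β/p)/(p Γ(γ))) · ∫_{1/η}^1 (1-x)^{γ-1} x^{-β/p-1} dx. In particular, the incomplete gamma density f_{β,γ,p,η} integrates to 1 over (0, ∞). -/

import Mathlib

open MeasureTheory Set

/-- The scaled lower incomplete gamma function `G_γ(u) = (1/Γ(γ)) ∫_0^u x^(γ-1) e^(-x) dx`. -/
noncomputable def Gl (γ u : ℝ) : ℝ :=
  (1 / Real.Gamma γ) * ∫ x in (0:ℝ)..u, x ^ (γ - 1) * Real.exp (-x)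

/-- `K*_{β,γ,p,η} = ∫_{1/η}^1 (1-x)^(γ-1) x^(-β/p-1) dx`. -/
noncomputable def Kstar (β γ p η : ℝ) : ℝ :=
  ∫ x in (1/η)..(1:ℝ), (1 - x) ^ (γ - 1) * x ^ (-β/p - 1)

/-- `K_{β,γ,p,η} = (Γ(γ-β/p)/(p Γ(γ))) K*_{β,γ,p,η}`. -/
noncomputable def Kc (β γ p η : ℝ) : ℝ :=
  Real.Gamma (γ - β/p) / (p * Real.Gamma γ) * Kstar β γ p η

/-- The incomplete gamma density `f_{β,γ,p,η}(u)`. -/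
noncomputable def figa (β γ p η u : ℝ) : ℝ :=
  (Kc β γ p η)⁻¹ * Gl γ (u ^ p * (η - 1)) * Real.exp (-(u ^ p)) * u ^ (-1 - β)

lemma iga_img {η : ℝ} (hη : 1 < η) :
    (fun x : ℝ => x⁻¹ - 1) '' Ioo (1/η) 1 = Ioo 0 (η - 1) := by
  have hη0 : (0:ℝ) < η := by linarith
  ext y
  constructor
  · rintro ⟨x, hx, rfl⟩
    have hx0 : 0 < x := lt_trans (by positivity) hx.1
    have hxi : x * x⁻¹ = 1 := mul_inv_cancel₀ hx0.ne'
    have hηi : η * (1/η) = 1 := by field_simp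
    constructor
    · have h1 : 1 < x⁻¹ := (one_lt_inv₀ hx0).mpr hx.2
      linarith
    · have h1 : 1/x < 1/(1/η) := one_div_lt_one_div_of_lt (by positivity) hx.1
      rw [one_div x, one_div_one_div] at h1
      linarith
  · intro hy
    have h1y : (0:ℝ) < 1 + y := by linarith [hy.1]
    refine ⟨(1 + y)⁻¹, ⟨?_, ?_⟩, by show (1+y)⁻¹⁻¹ - 1 = y; rw [inv_inv]; ring⟩
    · have h : 1 + y < η := by linarith [hy.2]
      have := one_div_lt_one_div_of_lt h1y h
      rw [one_div (1+y)] at this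
      exact this
    · have h1 : (1:ℝ) < 1 + y := by linarith [hy.1]
      have := one_div_lt_one_div_of_lt zero_lt_one h1
      rw [one_div (1+y)] at this
      simpa using this

lemma iga_step5 (γ σ : ℝ) {η : ℝ} (hη : 1 < η) :
    (∫ t in Ioo (0:ℝ) (η-1), t ^ (γ-1) * (1+t) ^ (-(γ-σ)))
      = ∫ x in Ioo (1/η) (1:ℝ), (1-x) ^ (γ-1) * x ^ (-σ-1) := by
  have hη0 : (0:ℝ) < η := by linarith
  have hderiv : ∀ x ∈ Ioo (1/η) (1:ℝ),
      HasDerivWithinAt (fun x : ℝ => x⁻¹ - 1) (-(x^2)⁻¹) (Ioo (1/η) 1) x := by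
    intro x hx
    have hx0 : 0 < x := lt_trans (by positivity) hx.1
    exact ((hasDerivAt_inv hx0.ne').sub_const 1).hasDerivWithinAt
  have hinj : InjOn (fun x : ℝ => x⁻¹ - 1) (Ioo (1/η) 1) := by
    intro x _ y _ h
    exact inv_injective (by dsimp at h; linarith)
  rw [← iga_img hη, integral_image_eq_integral_abs_deriv_smul measurableSet_Ioo hderiv hinj]
  refine setIntegral_congr_fun measurableSet_Ioo fun x hx => ?_
  have hx0 : 0 < x := lt_trans (by positivity) hx.1
  have hx1 : x < 1 := hx.2
  have e2 : 1 + (x⁻¹ - 1) = x⁻¹ := by ring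
  have e1 : x⁻¹ - 1 = (1-x)/x := by field_simp
  rw [smul_eq_mul, abs_neg, abs_of_pos (by positivity : (0:ℝ) < (x^2)⁻¹), e2, e1,
    Real.div_rpow (by linarith) hx0.le, Real.inv_rpow hx0.le, ← Real.rpow_neg hx0.le, neg_neg,
    div_eq_mul_inv, ← Real.rpow_neg hx0.le]
  have e3 : (x^2)⁻¹ = x ^ (-2 : ℝ) := by
    rw [← Real.rpow_natCast x 2, ← Real.rpow_neg hx0.le]
    norm_num
  rw [e3]
  rw [show x ^ (-2:ℝ) * ((1-x) ^ (γ-1) * x ^ (-(γ-1)) * x ^ (γ-σ))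
      = (1-x) ^ (γ-1) * (x ^ (-2:ℝ) * x ^ (-(γ-1)) * x ^ (γ-σ)) from by ring,
    ← Real.rpow_add hx0, ← Real.rpow_add hx0,
    show (-2 + -(γ-1) + (γ-σ) : ℝ) = -σ-1 from by ring]

theorem iga_normalization (γ p η β : ℝ) (hγ : 0 < γ) (hp : 0 < p) (hη : 1 < η)
    (hβ : β < p * γ) :
    (∫ u in Ioi (0:ℝ), Gl γ (u ^ p * (η - 1)) * Real.exp (-(u ^ p)) * u ^ (-1 - β)) =
      Real.Gamma (γ - β / p) / (p * Real.Gamma γ) *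
        ∫ x in (1/η)..(1:ℝ), (1 - x) ^ (γ - 1) * x ^ (-β/p - 1) ∧
    (∫ u in Ioi (0:ℝ), figa β γ p η u) = 1 := by
  have hη0 : (0:ℝ) < η := by linarith
  have hη1 : (0:ℝ) < η - 1 := by linarith
  have hσ : β / p < γ := by rw [div_lt_iff₀ hp]; linarith [hβ]
  have ha : 0 < γ - β / p := by linarith
  have hΓγ : 0 < Real.Gamma γ := Real.Gamma_pos_of_pos hγ
  have hΓa : 0 < Real.Gamma (γ - β / p) := Real.Gamma_pos_of_pos ha
  set F : ℝ → ℝ → ℝ := fun s t => s ^ (γ - β/p - 1) * t ^ (γ - 1) * Real.exp (-((1+t) * s))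
    with hF
  -- Step 1 : substitution u^p = s
  have step1 : (∫ u in Ioi (0:ℝ), Gl γ (u ^ p * (η - 1)) * Real.exp (-(u ^ p)) * u ^ (-1 - β))
      = ∫ s in Ioi (0:ℝ), (1/p) * (Gl γ (s * (η - 1)) * Real.exp (-s) * s ^ (-1 - β/p)) := by
    rw [← integral_comp_rpow_Ioi_of_pos (p := p)
      (g := fun s => (1/p) * (Gl γ (s * (η - 1)) * Real.exp (-s) * s ^ (-1 - β/p))) hp]
    refine setIntegral_congr_fun measurableSet_Ioi fun x hx => ?_
    have hx0 : (0:ℝ) < x := hx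
    have h1 : (x ^ p) ^ (-1 - β/p) = x ^ (p * (-1 - β/p)) := (Real.rpow_mul hx0.le _ _).symm
    have h2 : p * (-1 - β/p) = -p - β := by field_simp
    rw [smul_eq_mul, h1, h2, show (-1 - β : ℝ) = (p - 1) + (-p - β) by ring,
      Real.rpow_add hx0]
    field_simp
  -- Step 2 : rewrite the integrand as an inner integral
  have step2 : ∀ s ∈ Ioi (0:ℝ),
      Gl γ (s * (η - 1)) * Real.exp (-s) * s ^ (-1 - β/p)
        = (1 / Real.Gamma γ) * ∫ t in Ioo (0:ℝ) (η-1), F s t := by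
    intro s hs
    have hs0 : (0:ℝ) < s := hs
    have h1 : (∫ x in (0:ℝ)..(s*(η-1)), x ^ (γ-1) * Real.exp (-x))
        = s * ∫ t in (0:ℝ)..(η-1), (s*t) ^ (γ-1) * Real.exp (-(s*t)) := by
      rw [intervalIntegral.integral_comp_mul_left
        (fun x => x ^ (γ-1) * Real.exp (-x)) hs0.ne', smul_eq_mul, mul_zero,
        ← mul_assoc, mul_inv_cancel₀ hs0.ne', one_mul]
    rw [Gl, h1, intervalIntegral.integral_of_le hη1.le, ← integral_Ioc_eq_integral_Ioo]
    rw [show (1 / Real.Gamma γ) * (s * ∫ t in Ioc (0:ℝ) (η-1), (s*t) ^ (γ-1) * Real.exp (-(s*t)))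
        * Real.exp (-s) * s ^ (-1 - β/p)
      = (1 / Real.Gamma γ) * ((s * Real.exp (-s) * s ^ (-1 - β/p)) *
          ∫ t in Ioc (0:ℝ) (η-1), (s*t) ^ (γ-1) * Real.exp (-(s*t))) by ring]
    rw [← MeasureTheory.integral_const_mul (μ := volume.restrict (Ioc (0:ℝ) (η-1)))
      (s * Real.exp (-s) * s ^ (-1 - β/p))
      (fun t => (s*t) ^ (γ-1) * Real.exp (-(s*t)))]
    simp only [MeasureTheory.integral_Ioc_eq_integral_Ioo]
    congr 1
    refine setIntegral_congr_fun measurableSet_Ioo fun t ht => ?_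
    have ht0 : 0 < t := ht.1
    have e1 : s * s ^ (γ-1) * s ^ (-1 - β/p) = s ^ (γ - β/p - 1) := by
      rw [show (γ - β/p - 1 : ℝ) = (1 + (γ-1)) + (-1 - β/p) by ring,
        Real.rpow_add hs0, Real.rpow_add hs0, Real.rpow_one]
    have eexp : Real.exp (-s) * Real.exp (-(s*t)) = Real.exp (-((1+t)*s)) := by
      rw [← Real.exp_add]; congr 1; ring
    rw [hF]; dsimp only
    rw [Real.mul_rpow hs0.le ht0.le, ← e1, ← eexp]
    ring
  -- measurability
  have hFcont : ContinuousOn (Function.uncurry F) (Ioi (0:ℝ) ×ˢ Ioo (0:ℝ) (η-1)) := by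
    have h1 : ContinuousOn (fun q : ℝ × ℝ => q.1 ^ (γ - β/p - 1))
        (Ioi (0:ℝ) ×ˢ Ioo (0:ℝ) (η-1)) :=
      continuous_fst.continuousOn.rpow_const fun q hq => Or.inl (ne_of_gt hq.1)
    have h2 : ContinuousOn (fun q : ℝ × ℝ => q.2 ^ (γ - 1))
        (Ioi (0:ℝ) ×ˢ Ioo (0:ℝ) (η-1)) :=
      continuous_snd.continuousOn.rpow_const fun q hq => Or.inl (ne_of_gt hq.2.1)
    have h3 : Continuous (fun q : ℝ × ℝ => Real.exp (-((1+q.2) * q.1))) := by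
      continuity
    exact (h1.mul h2).mul h3.continuousOn
  have hFmeas : AEStronglyMeasurable (Function.uncurry F)
      ((volume.restrict (Ioi (0:ℝ))).prod (volume.restrict (Ioo (0:ℝ) (η-1)))) := by
    rw [Measure.prod_restrict]
    exact hFcont.aestronglyMeasurable (measurableSet_Ioi.prod measurableSet_Ioo)
  -- integrability of sections
  have hsec : ∀ t ∈ Ioo (0:ℝ) (η-1), IntegrableOn (fun s => F s t) (Ioi (0:ℝ)) := by
    intro t ht
    have ht1 : (0:ℝ) < 1 + t := by linarith [ht.1]
    have base : IntegrableOn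
        (fun s : ℝ => s ^ (γ - β/p - 1) * Real.exp (-(1+t) * s ^ (1:ℝ))) (Ioi 0) :=
      integrableOn_rpow_mul_exp_neg_mul_rpow (by linarith) zero_lt_one ht1
    have h2 : IntegrableOn
        (fun s : ℝ => s ^ (γ - β/p - 1) * Real.exp (-(1+t) * s ^ (1:ℝ)) * t ^ (γ - 1))
        (Ioi (0:ℝ)) := base.mul_const (t ^ (γ - 1))
    refine h2.congr_fun (fun s hs => ?_) measurableSet_Ioi
    beta_reduce
    rw [Real.rpow_one, neg_mul, hF]
    ring
  -- step 4 : inner integral value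
  have step4 : ∀ t ∈ Ioo (0:ℝ) (η-1), (∫ s in Ioi (0:ℝ), F s t)
      = Real.Gamma (γ - β/p) * (t ^ (γ-1) * (1+t) ^ (-(γ - β/p))) := by
    intro t ht
    have ht1 : (0:ℝ) < 1 + t := by linarith [ht.1]
    have h1 : (∫ s in Ioi (0:ℝ), F s t)
        = ∫ s in Ioi (0:ℝ), t ^ (γ-1) * (s ^ (γ - β/p - 1) * Real.exp (-((1+t) * s))) := by
      refine setIntegral_congr_fun measurableSet_Ioi fun s hs => ?_
      rw [hF]; ring
    rw [h1, MeasureTheory.integral_const_mul, Real.integral_rpow_mul_exp_neg_mul_Ioi ha ht1,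
      one_div, Real.inv_rpow ht1.le, ← Real.rpow_neg ht1.le]
    ring
  -- global integrability for Fubini
  have hInt : Integrable (Function.uncurry F)
      ((volume.restrict (Ioi (0:ℝ))).prod (volume.restrict (Ioo (0:ℝ) (η-1)))) := by
    rw [MeasureTheory.integrable_prod_iff' hFmeas]
    constructor
    · filter_upwards [self_mem_ae_restrict measurableSet_Ioo] with t ht
      exact hsec t ht
    · have key : ∀ t ∈ Ioo (0:ℝ) (η-1), (∫ s in Ioi (0:ℝ), ‖F s t‖)
          = Real.Gamma (γ - β/p) * (t ^ (γ-1) * (1+t) ^ (-(γ - β/p))) := by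
        intro t ht
        rw [← step4 t ht]
        refine setIntegral_congr_fun measurableSet_Ioi fun s hs => ?_
        have hs0 : (0:ℝ) < s := hs
        have ht0 : (0:ℝ) < t := ht.1
        refine Real.norm_of_nonneg ?_
        rw [hF]
        positivity
      have target_int : IntegrableOn
          (fun t : ℝ => Real.Gamma (γ - β/p) * (t ^ (γ-1) * (1+t) ^ (-(γ - β/p))))
          (Ioo (0:ℝ) (η-1)) := by
        refine Integrable.const_mul ?_ _
        have h1 : IntervalIntegrable (fun t : ℝ => t ^ (γ-1)) volume 0 (η-1) :=
          intervalIntegral.intervalIntegrable_rpow' (by linarith)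
        have h2 : ContinuousOn (fun t : ℝ => (1+t) ^ (-(γ - β/p))) (uIcc (0:ℝ) (η-1)) := by
          refine ContinuousOn.rpow_const (continuous_const.add continuous_id).continuousOn
            fun t ht => Or.inl ?_
          rw [uIcc_of_le hη1.le] at ht
          have := ht.1
          positivity
        have h3 := h1.mul_continuousOn h2
        rwa [intervalIntegrable_iff_integrableOn_Ioo_of_le hη1.le] at h3
      refine target_int.congr ?_
      filter_upwards [self_mem_ae_restrict measurableSet_Ioo] with t ht
      exact (key t ht).symm
  have swap : (∫ s in Ioi (0:ℝ), ∫ t in Ioo (0:ℝ) (η-1), F s t)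
      = ∫ t in Ioo (0:ℝ) (η-1), ∫ s in Ioi (0:ℝ), F s t :=
    MeasureTheory.integral_integral_swap hInt
  -- main computation
  have main : (∫ u in Ioi (0:ℝ), Gl γ (u ^ p * (η - 1)) * Real.exp (-(u ^ p)) * u ^ (-1 - β)) =
      Real.Gamma (γ - β / p) / (p * Real.Gamma γ) *
        ∫ x in (1/η)..(1:ℝ), (1 - x) ^ (γ - 1) * x ^ (-β/p - 1) := by
    rw [step1, MeasureTheory.integral_const_mul,
      setIntegral_congr_fun measurableSet_Ioi step2, MeasureTheory.integral_const_mul, swap,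
      setIntegral_congr_fun measurableSet_Ioo step4, MeasureTheory.integral_const_mul]
    have h5 := iga_step5 γ (β/p) hη
    have hexp : ∀ x : ℝ, x ^ (-(β/p)-1) = x ^ (-β/p - 1) := by
      intro x; congr 1; ring
    simp_rw [hexp] at h5
    rw [h5, intervalIntegral.integral_of_le (by rw [div_le_one hη0]; linarith),
      integral_Ioc_eq_integral_Ioo]
    field_simp
  refine ⟨main, ?_⟩
  -- normalization
  have hKstar : 0 < Kstar β γ p η := by
    have h1η : 1/η < 1 := by rw [div_lt_one hη0]; exact hη
    have hint : IntervalIntegrable (fun x : ℝ => (1-x) ^ (γ-1) * x ^ (-β/p - 1))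
        volume (1/η) 1 := by
      have h1 : IntervalIntegrable (fun x : ℝ => x ^ (γ-1)) volume 0 (1 - 1/η) :=
        intervalIntegral.intervalIntegrable_rpow' (by linarith)
      have h2 := h1.comp_sub_left 1
      rw [sub_zero, show (1 : ℝ) - (1 - 1/η) = 1/η by ring] at h2
      have h3 : ContinuousOn (fun x : ℝ => x ^ (-β/p - 1)) (uIcc (1/η) 1) := by
        refine ContinuousOn.rpow_const continuousOn_id fun x hx => Or.inl ?_
        rw [uIcc_of_le h1η.le] at hx
        have h0 : (0:ℝ) < 1/η := by positivity
        exact ne_of_gt (lt_of_lt_of_le h0 hx.1)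
      exact (h2.symm).mul_continuousOn h3
    refine intervalIntegral.intervalIntegral_pos_of_pos_on hint ?_ h1η
    intro x hx
    have hx0 : 0 < x := lt_trans (by positivity) hx.1
    have hx1 : x < 1 := hx.2
    have : (0:ℝ) < 1 - x := by linarith
    positivity
  have hKc : 0 < Kc β γ p η :=
    mul_pos (div_pos hΓa (mul_pos hp hΓγ)) hKstar
  have hfig : (∫ u in Ioi (0:ℝ), figa β γ p η u)
      = (Kc β γ p η)⁻¹ * ∫ u in Ioi (0:ℝ),
          Gl γ (u ^ p * (η - 1)) * Real.exp (-(u ^ p)) * u ^ (-1 - β) := by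
    rw [← MeasureTheory.integral_const_mul]
    refine setIntegral_congr_fun measurableSet_Ioi fun u hu => ?_
    rw [figa]; ring
  rw [hfig, main]
  have : Real.Gamma (γ - β / p) / (p * Real.Gamma γ) *
      (∫ x in (1/η)..(1:ℝ), (1 - x) ^ (γ - 1) * x ^ (-β/p - 1)) = Kc β γ p η := rfl
  rw [this, inv_mul_cancel₀ hKc.ne']
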